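/- arXiv:2512.21154 — 5 statements merged into one kernel-verified Lean document; each statement's English description precedes it below -/
import Mathlib

section
/- Let Λ = ℤ² ⊂ ℝ² and let D be the closed unit disk. The tropical distance function F(p) = inf over nonzero λ ∈ ℤ² of (‖λ‖ + λ·p) vanishes at a point p of the closed disk if and only if ‖p‖ = 1, i.e. p lies on the boundary circle. -/
set_option maxHeartbeats 1000000

open Real

/-- Key approximation lemma: on the unit circle with `|y| ≤ |x|`, lattice vectors
give arbitrarily small values of `‖λ‖ + λ·p`. -/
lemma key_approx (x y : ℝ) (hxy : x ^ 2 + y ^ 2 = 1) (hyx : |y| ≤ |x|) (N : ℕ) (hN : 0 < N) :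
    ∃ m n : ℤ, (m, n) ≠ (0, 0) ∧
      Real.sqrt ((m : ℝ) ^ 2 + (n : ℝ) ^ 2) + ((m : ℝ) * x + (n : ℝ) * y)
        ≤ (1 / (N + 1)) ^ 2 := by
  have hx0 : x ≠ 0 := by
    intro h
    rw [h] at hyx hxy
    simp at hyx
    rw [hyx] at hxy
    norm_num [h] at hxy
  have hx1 : |x| ≤ 1 := by nlinarith [abs_nonneg x, sq_abs x]
  have hx1' : 1 ≤ 1 / |x| := by
    rw [le_div_iff₀ (abs_pos.mpr hx0)]; linarith
  obtain ⟨j, k, hk0, hkN, hjk⟩ := Real.exists_int_int_abs_mul_sub_le (y / x) hN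
  have hN1 : (0:ℝ) < (N:ℝ) + 1 := by positivity
  -- d = k y - j x  (orthogonal component), a = k x + j y  (parallel component)
  set d : ℝ := (k:ℝ) * y - (j:ℝ) * x with hd
  set a : ℝ := (k:ℝ) * x + (j:ℝ) * y with ha
  have hdb : |d| ≤ 1 / ((N:ℝ) + 1) := by
    have : d = x * ((k:ℝ) * (y / x) - j) := by field_simp [hd]; ring
    rw [this, abs_mul]
    calc |x| * |(k:ℝ) * (y / x) - j| ≤ 1 * (1 / ((N:ℝ)+1)) :=
          mul_le_mul hx1 hjk (abs_nonneg _) zero_le_one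
      _ = 1 / ((N:ℝ)+1) := by ring
  -- lower bound on |a|
  have hk1 : (1:ℝ) ≤ (k:ℝ) := by exact_mod_cast hk0
  have hab : 1 / 2 ≤ |a| := by
    have hae : a = (k:ℝ) / x - ((k:ℝ) * (y / x) - j) * y := by
      field_simp [ha]; nlinarith [hxy]
    have h1 : (k:ℝ) / |x| ≤ |(k:ℝ) / x| := by
      rw [abs_div, abs_of_pos (show (0:ℝ) < (k:ℝ) by linarith)]
    have h2 : |((k:ℝ) * (y / x) - j) * y| ≤ 1 / ((N:ℝ) + 1) * 1 := by
      rw [abs_mul]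
      exact mul_le_mul hjk (le_trans hyx hx1) (abs_nonneg _) (by positivity)
    have h3 : (1:ℝ) ≤ (k:ℝ) / |x| := by
      calc (1:ℝ) = 1 * 1 := by ring
        _ ≤ (k:ℝ) * (1 / |x|) := mul_le_mul hk1 hx1' zero_le_one (by linarith)
        _ = (k:ℝ) / |x| := by ring
    have h4 : 1 / ((N:ℝ) + 1) ≤ 1 / 2 := by
      apply div_le_div_of_nonneg_left (by norm_num) (by norm_num)
      have : (1:ℝ) ≤ (N:ℝ) := by exact_mod_cast hN
      linarith
    have := abs_sub_abs_le_abs_sub ((k:ℝ) / x) (((k:ℝ) * (y / x) - j) * y)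
    rw [← hae] at this
    linarith
  -- choose the sign so that λ·p = -|a|
  obtain ⟨m, n, hmn, hval, hsq⟩ :
      ∃ m n : ℤ, (m, n) ≠ (0, 0) ∧ (m:ℝ) * x + (n:ℝ) * y = -|a| ∧
        ((m:ℝ)) ^ 2 + ((n:ℝ)) ^ 2 = (k:ℝ) ^ 2 + (j:ℝ) ^ 2 := by
    rcases le_or_gt a 0 with h | h
    · exact ⟨k, j, by simp [Prod.ext_iff]; intro h'; omega,
        by rw [abs_of_nonpos h]; simp [ha], by push_cast; ring⟩
    · exact ⟨-k, -j, by simp [Prod.ext_iff]; intro h'; omega,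
        by rw [abs_of_pos h]; push_cast; simp [ha]; ring, by push_cast; ring⟩
  refine ⟨m, n, hmn, ?_⟩
  -- Pythagoras: k² + j² = a² + d²  (since x² + y² = 1)
  have hpyth : (k:ℝ) ^ 2 + (j:ℝ) ^ 2 = a ^ 2 + d ^ 2 := by
    rw [ha, hd]; nlinarith [hxy]
  rw [hval, hsq, hpyth]
  have hd2 : d ^ 2 ≤ (1 / ((N:ℝ) + 1)) ^ 2 := by
    rw [← sq_abs d]
    exact pow_le_pow_left₀ (abs_nonneg d) hdb 2
  have habs : a ^ 2 = |a| ^ 2 := (sq_abs a).symm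
  -- √(a² + d²) ≤ |a| + d²  since |a| ≥ 1/2
  have hs : Real.sqrt (a ^ 2 + d ^ 2) ≤ |a| + d ^ 2 := by
    rw [Real.sqrt_le_iff]
    constructor
    · positivity
    · nlinarith [sq_nonneg d, hab]
  have h6 : Real.sqrt (a ^ 2 + d ^ 2) + -|a| ≤ d ^ 2 := by linarith
  exact h6.trans hd2

/-- For the closed unit disk `D` in the Euclidean plane and the standard lattice `ℤ²`,
the tropical distance function `F(p) = inf_{λ∈ℤ²∖{0}} (‖λ‖ + λ·p)` vanishes at a
point `p` of the disk if and only if `p` lies on the boundary circle `‖p‖ = 1`. -/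
theorem disk_tropical_distance_zero_iff_boundary
    (p : EuclideanSpace ℝ (Fin 2)) (hp : ‖p‖ ≤ 1) :
    sInf {v : ℝ | ∃ m n : ℤ, (m, n) ≠ (0, 0) ∧
        v = Real.sqrt ((m : ℝ) ^ 2 + (n : ℝ) ^ 2) + ((m : ℝ) * p 0 + (n : ℝ) * p 1)}
      = 0 ↔ ‖p‖ = 1 := by
  set x := p 0
  set y := p 1
  have hnorm : ‖p‖ = Real.sqrt (x ^ 2 + y ^ 2) := by
    rw [EuclideanSpace.norm_eq]
    congr 1
    rw [Fin.sum_univ_two]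
    simp [Real.norm_eq_abs, sq_abs, x, y]
  set S : Set ℝ := {v : ℝ | ∃ m n : ℤ, (m, n) ≠ (0, 0) ∧
      v = Real.sqrt ((m : ℝ) ^ 2 + (n : ℝ) ^ 2) + ((m : ℝ) * x + (n : ℝ) * y)} with hS
  have hSne : S.Nonempty := ⟨Real.sqrt 1 + x, 1, 0, by norm_num, by norm_num⟩
  set B := Real.sqrt (x ^ 2 + y ^ 2) with hB
  have hB0 : 0 ≤ B := Real.sqrt_nonneg _
  have hB2 : B ^ 2 = x ^ 2 + y ^ 2 := Real.sq_sqrt (by positivity)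
  have hPle : B ≤ 1 := hnorm ▸ hp
  have hlow : ∀ v ∈ S, 1 - B ≤ v := by
    rintro v ⟨m, n, hmn, rfl⟩
    set A := Real.sqrt ((m:ℝ) ^ 2 + (n:ℝ) ^ 2) with hA
    have hA1 : 1 ≤ A := by
      rw [hA, show (1:ℝ) = Real.sqrt 1 by simp]
      apply Real.sqrt_le_sqrt
      have h' : m ≠ 0 ∨ n ≠ 0 := by
        by_contra h; push_neg at h; exact hmn (by simp [h.1, h.2])
      have : (1:ℤ) ≤ m ^ 2 + n ^ 2 := by
        rcases h' with h | h
        · nlinarith [sq_nonneg n, Int.one_le_abs h, sq_abs m, sq_nonneg (|m| - 1)]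
        · nlinarith [sq_nonneg m, Int.one_le_abs h, sq_abs n, sq_nonneg (|n| - 1)]
      exact_mod_cast this
    have hA2 : A ^ 2 = (m:ℝ) ^ 2 + (n:ℝ) ^ 2 := Real.sq_sqrt (by positivity)
    have hA0 : 0 ≤ A := Real.sqrt_nonneg _
    have hABsq : (A * B) ^ 2 = ((m:ℝ) * x + (n:ℝ) * y) ^ 2 + ((m:ℝ) * y - (n:ℝ) * x) ^ 2 := by
      rw [mul_pow, hA2, hB2]; ring
    have hcs : -(A * B) ≤ (m:ℝ) * x + (n:ℝ) * y := by
      nlinarith [sq_nonneg ((m:ℝ) * y - (n:ℝ) * x), sq_nonneg (A * B + ((m:ℝ) * x + (n:ℝ) * y)),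
        mul_nonneg hA0 hB0]
    have h5 : 1 * (1 - B) ≤ A * (1 - B) :=
      mul_le_mul_of_nonneg_right hA1 (by linarith)
    nlinarith
  have hBdd : BddBelow S := ⟨1 - B, hlow⟩
  constructor
  · intro h
    have h1 : 1 - B ≤ sInf S := le_csInf hSne hlow
    rw [h] at h1
    rw [hnorm]
    linarith
  · intro h
    have hB1 : B = 1 := by rw [hnorm] at h; exact h
    have hxy : x ^ 2 + y ^ 2 = 1 := by rw [← hB2, hB1]; norm_num
    apply le_antisymm
    · rw [Real.sInf_le_iff hBdd hSne]
      intro ε hε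
      obtain ⟨N, hN⟩ := exists_nat_one_div_lt hε
      have hsmall : ((1:ℝ) / (N + 1 + 1)) ^ 2 < ε := by
        have h1 : (0:ℝ) < (N:ℝ) + 1 + 1 := by positivity
        have h2 : (0:ℝ) ≤ 1 / ((N:ℝ) + 1 + 1) := by positivity
        have h3 : (1:ℝ) / ((N:ℝ) + 1 + 1) ≤ 1 / ((N:ℝ) + 1) := by
          apply div_le_div_of_nonneg_left one_pos.le (by positivity); linarith
        have h4 : (1:ℝ) / ((N:ℝ) + 1 + 1) ≤ 1 := by
          rw [div_le_one h1]; linarith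
        nlinarith
      rcases le_or_gt (|y|) (|x|) with hc | hc
      · obtain ⟨m, n, hmn, hv⟩ := key_approx x y hxy hc (N + 1) (Nat.succ_pos N)
        refine ⟨_, ⟨m, n, hmn, rfl⟩, ?_⟩
        push_cast at hv ⊢
        linarith
      · obtain ⟨m, n, hmn, hv⟩ := key_approx y x (by linarith) hc.le (N + 1) (Nat.succ_pos N)
        refine ⟨_, ⟨n, m, ?_, rfl⟩, ?_⟩
        · rintro h'
          apply hmn
          rw [Prod.mk.injEq] at h' ⊢
          exact ⟨h'.2, h'.1⟩
        · push_cast at hv ⊢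
          have : Real.sqrt ((n:ℝ) ^ 2 + (m:ℝ) ^ 2) + ((n:ℝ) * x + (m:ℝ) * y)
              = Real.sqrt ((m:ℝ) ^ 2 + (n:ℝ) ^ 2) + ((m:ℝ) * y + (n:ℝ) * x) := by
            rw [add_comm ((n:ℝ)^2)]; ring_nf
          rw [this]; linarith
    · exact le_csInf hSne (fun v hv => by rw [hB1] at hlow; linarith [hlow v hv])
end

section
/- Let Q(x,y) = ax² + bxy + cy² with a, c > 0 and 4ac − b² = 4, and suppose the point z = −b/(2a) + i/a of the upper half plane satisfies |Re z| < 1/2 and |z| > 1. Then among all nonzero λ ∈ ℤ², the minimum of √(Q*(λ)) (where Q*(m,n) = c m² − b m n + a n²) is attained at λ = (±1, 0) and equals √a, i.e. the tropical distance function of the ellipse Q ≤ 1 at the origin equals √a. -/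
/-- Let `Q(x,y) = ax² + bxy + cy²` with `a, c > 0`, `4ac − b² = 4`, and suppose
the point `z = −b/(2a) + i/a` lies in the interior of the standard fundamental
domain: `|Re z| < 1/2` and `|z| > 1`. Then the minimum over nonzero `λ ∈ ℤ²` of
`√(Q*(λ))`, where `Q*(m,n) = c m² − b m n + a n²`, is attained (e.g. at
`λ = (±1,0)`) and equals `√a`; i.e. the tropical distance function of the
ellipse `Q ≤ 1` at the origin equals `√a`. -/
theorem ellipse_center_tropical_distance (a b c : ℝ) (ha : 0 < a) (hc : 0 < c)
    (hdisc : 4 * a * c - b ^ 2 = 4)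
    (hRe : |(-b / (2 * a))| < 1 / 2)
    (habs : (-b / (2 * a)) ^ 2 + (1 / a) ^ 2 > 1) :
    IsLeast {v : ℝ | ∃ m n : ℤ, (m, n) ≠ (0, 0) ∧
        v = Real.sqrt (c * (m : ℝ) ^ 2 - b * (m : ℝ) * (n : ℝ) + a * (n : ℝ) ^ 2)}
      (Real.sqrt a) := by
  -- derive |b| < a and a < c
  have hb : |b| < a := by
    rw [abs_div, abs_neg, abs_of_pos (by linarith : (0:ℝ) < 2 * a),
      div_lt_div_iff₀ (by linarith) (by norm_num)] at hRe
    linarith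
  have hca : a < c := by
    have ha2 : (0:ℝ) < a ^ 2 := by positivity
    have h : b ^ 2 + 4 > 4 * a ^ 2 := by
      have h1 : (-b / (2 * a)) ^ 2 + (1 / a) ^ 2 = (b ^ 2 + 4) / (4 * a ^ 2) := by
        field_simp
        ring
      rw [h1, gt_iff_lt, lt_div_iff₀ (by positivity)] at habs
      linarith
    nlinarith
  constructor
  · refine ⟨0, 1, by simp, ?_⟩
    push_cast
    norm_num
  · rintro v ⟨m, n, hmn, rfl⟩
    apply Real.sqrt_le_sqrt
    have key : ∀ k : ℤ, k ≠ 0 → (1:ℝ) ≤ |(k:ℝ)| := by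
      intro k hk
      have : (1:ℤ) ≤ |k| := Int.one_le_abs hk
      exact_mod_cast this
    rcases eq_or_ne n 0 with hn | hn
    · have hm : m ≠ 0 := by
        intro h; exact hmn (by rw [h, hn])
      have hM := key m hm
      have hM2 : (1:ℝ) ≤ (m:ℝ) ^ 2 := by nlinarith [abs_nonneg (m:ℝ), sq_abs (m:ℝ)]
      subst hn
      push_cast
      nlinarith
    · rcases eq_or_ne m 0 with hm | hm
      · have hN := key n hn
        have hN2 : (1:ℝ) ≤ (n:ℝ) ^ 2 := by nlinarith [abs_nonneg (n:ℝ), sq_abs (n:ℝ)]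
        subst hm
        push_cast
        nlinarith
      · have hM := key m hm
        have hN := key n hn
        set M := (m:ℝ)
        set N := (n:ℝ)
        have h2 : 2 * (|M| * |N|) ≤ M ^ 2 + N ^ 2 := by
          nlinarith [sq_nonneg (|M| - |N|), sq_abs M, sq_abs N]
        have h3 : b * M * N ≤ a * (|M| * |N|) := by
          calc b * M * N ≤ |b * M * N| := le_abs_self _
            _ = |b| * (|M| * |N|) := by rw [abs_mul, abs_mul, mul_assoc]
            _ ≤ a * (|M| * |N|) := by
                apply mul_le_mul_of_nonneg_right hb.le (by positivity)
        have hcM : a * M ^ 2 ≤ c * M ^ 2 :=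
          mul_le_mul_of_nonneg_right hca.le (sq_nonneg M)
        have hone : (1:ℝ) ≤ |M| * |N| := one_le_mul_of_one_le_of_one_le hM hN
        nlinarith [mul_le_mul_of_nonneg_left h2 ha.le,
          mul_le_mul_of_nonneg_left hone ha.le]
end

section
/- Let α > 0 be irrational and consider the curve P(t) = e^t·(1, α) + e^{−t}·(β, γ) in ℝ² for fixed β, γ > 0. Then there exists a constant M (depending only on α, β, γ) such that for all t ≥ 0 there exist integers p, q, not both zero, with q ≥ 0, p ≥ 0 and |p·x(t) − q·y(t)| ≤ M, where (x(t), y(t)) = P(t); in fact one may take p/q a continued fraction convergent of α. -/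
open Real

/-- Along the curve `P(t) = e^t·(1, α) + e^{−t}·(β, γ)` with `α > 0` irrational
and `β, γ > 0`, there is a constant `M` such that for every `t ≥ 0` some
nonzero integer linear form `p·x − q·y` with `p, q ≥ 0` is bounded by `M`
at `P(t)`. -/
theorem cone_tropical_distance_bounded (α β γ : ℝ)
    (hα : Irrational α) (hα0 : 0 < α) (hβ : 0 < β) (hγ : 0 < γ) :
    ∃ M : ℝ, ∀ t : ℝ, 0 ≤ t → ∃ p q : ℕ, (p, q) ≠ (0, 0) ∧
      |(p : ℝ) * (exp t * 1 + exp (-t) * β) - (q : ℝ) * (exp t * α + exp (-t) * γ)|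
        ≤ M := by
  refine ⟨1 + ((2 * α + 1) * β + 2 * γ), fun t ht => ?_⟩
  set n : ℕ := ⌈exp t⌉₊ with hn
  have het1 : (1 : ℝ) ≤ exp t := by simpa using exp_le_exp.mpr ht
  have hn_pos : 0 < n := by
    rw [hn]; exact Nat.ceil_pos.mpr (lt_of_lt_of_le one_pos het1)
  have hen : exp t ≤ (n : ℝ) := Nat.le_ceil _
  have hnle : (n : ℝ) ≤ exp t + 1 := le_of_lt (Nat.ceil_lt_add_one (le_trans zero_le_one het1))
  obtain ⟨j, k, hk0, hkn, hjk⟩ := Real.exists_int_int_abs_mul_sub_le α hn_pos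
  -- j ≥ 0
  have hk0' : (0 : ℝ) < (k : ℝ) := by exact_mod_cast hk0
  have hkα : (0 : ℝ) < (k : ℝ) * α := mul_pos hk0' hα0
  have h1n : (1 : ℝ) / ((n : ℝ) + 1) ≤ 1 := by
    have h1 : (1:ℝ) ≤ n := by exact_mod_cast hn_pos
    rw [div_le_one (by positivity)]; linarith
  have hj_lb : (-1 : ℝ) < (j : ℝ) := by
    have := (abs_le.mp hjk).2
    nlinarith
  have hj0 : 0 ≤ j := by exact_mod_cast Int.lt_iff_add_one_le.mp (by exact_mod_cast hj_lb : (-1 : ℤ) < j)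
  refine ⟨j.toNat, k.toNat, ?_, ?_⟩
  · intro h
    have : k.toNat = 0 := (Prod.mk.injEq _ _ _ _ ▸ h).2
    omega
  · have hjr : ((j.toNat : ℕ) : ℝ) = (j : ℝ) := by exact_mod_cast Int.toNat_of_nonneg hj0
    have hkr : ((k.toNat : ℕ) : ℝ) = (k : ℝ) := by exact_mod_cast Int.toNat_of_nonneg hk0.le
    rw [hjr, hkr]
    have key : (j : ℝ) * (exp t * 1 + exp (-t) * β) - (k : ℝ) * (exp t * α + exp (-t) * γ)
        = exp t * ((j : ℝ) - (k : ℝ) * α) + exp (-t) * ((j : ℝ) * β - (k : ℝ) * γ) := by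
      ring
    rw [key]
    have hexp_pos : (0 : ℝ) < exp t := exp_pos t
    have hexpneg : exp (-t) ≤ 1 := by
      rw [exp_neg]; exact inv_le_one_of_one_le₀ het1
    have hexpneg_pos : (0 : ℝ) < exp (-t) := exp_pos _
    -- first term bound
    have h1 : |exp t * ((j : ℝ) - (k : ℝ) * α)| ≤ 1 := by
      rw [abs_mul, abs_of_pos hexp_pos, abs_sub_comm]
      have : exp t * |(k : ℝ) * α - (j : ℝ)| ≤ exp t * (1 / ((n : ℝ) + 1)) :=
        mul_le_mul_of_nonneg_left hjk hexp_pos.le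
      refine this.trans ?_
      rw [mul_one_div, div_le_one (by positivity)]
      linarith
    -- second term bound
    have hkle : (k : ℝ) ≤ (n : ℝ) := by exact_mod_cast hkn
    have hk2 : (k : ℝ) ≤ 2 * exp t := by linarith
    have hjle : (j : ℝ) ≤ (k : ℝ) * α + 1 := by
      have := (abs_le.mp hjk).1
      linarith
    have hj2 : (j : ℝ) ≤ exp t * (2 * α + 1) := by nlinarith
    have h2 : |exp (-t) * ((j : ℝ) * β - (k : ℝ) * γ)| ≤ (2 * α + 1) * β + 2 * γ := by
      rw [abs_mul, abs_of_pos hexpneg_pos]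
      have habs : |(j : ℝ) * β - (k : ℝ) * γ| ≤ (j : ℝ) * β + (k : ℝ) * γ := by
        have hj0r : (0 : ℝ) ≤ (j : ℝ) := by exact_mod_cast hj0
        rw [abs_sub_le_iff]
        constructor <;> nlinarith
      have hjkb : (j : ℝ) * β + (k : ℝ) * γ ≤ exp t * ((2 * α + 1) * β + 2 * γ) := by
        nlinarith
      calc exp (-t) * |(j : ℝ) * β - (k : ℝ) * γ|
          ≤ exp (-t) * (exp t * ((2 * α + 1) * β + 2 * γ)) := by
            exact mul_le_mul_of_nonneg_left (habs.trans hjkb) hexpneg_pos.le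
        _ = (2 * α + 1) * β + 2 * γ := by
            rw [← mul_assoc, ← exp_add]; simp
    calc |exp t * ((j : ℝ) - (k : ℝ) * α) + exp (-t) * ((j : ℝ) * β - (k : ℝ) * γ)|
        ≤ |exp t * ((j : ℝ) - (k : ℝ) * α)| + |exp (-t) * ((j : ℝ) * β - (k : ℝ) * γ)| :=
          abs_add_le _ _
      _ ≤ 1 + ((2 * α + 1) * β + 2 * γ) := add_le_add h1 h2
end

section
/- Let Ω ⊂ ℝ² be a convex set containing no affine line, and let Λ ⊂ ℝ² be any lattice (discrete cocompact subgroup). Then there exists a nonzero λ ∈ Λ such that c_λ := sup_{p∈Ω} (−λ·p) is finite. -/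
open Filter Topology Metric Set

/-- dot product on ℝ × ℝ -/
def dotp (a b : ℝ × ℝ) : ℝ := a.1 * b.1 + a.2 * b.2

/-- cross product on ℝ × ℝ -/
def crossp (a b : ℝ × ℝ) : ℝ := a.1 * b.2 - a.2 * b.1

set_option maxHeartbeats 1000000 in
lemma scalar_aux (α cr P Q a b : ℝ)
    (idA : cr * a = P + Q * α) (idB : cr * b = P * α + Q)
    (id3 : cr ^ 2 = 1 - α ^ 2) (hQsq : Q ^ 2 + a ^ 2 = 1)
    (hcr : 0 < cr) (ha : α ≤ a) (hb : α ≤ b) (hsum : a + b ≤ 0) (hP : 0 < P) : False := by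
  have hα2 : α ^ 2 < 1 := by nlinarith
  have hα1 : -1 < α := by nlinarith
  have hαle : α ≤ 0 := by linarith
  have hQneg : Q < 0 := by
    have hsum' : cr * (a + b) = (P + Q) * (1 + α) := by linear_combination idA + idB
    have h1 : cr * (a + b) ≤ 0 := mul_nonpos_of_nonneg_of_nonpos (le_of_lt hcr) hsum
    nlinarith
  have ha_pos : 0 < a := by
    have h1 : 0 ≤ Q * α := by nlinarith [mul_nonneg (neg_nonneg.2 (le_of_lt hQneg)) (neg_nonneg.2 hαle)]
    by_contra h
    push_neg at h
    have h2 := mul_nonpos_of_nonneg_of_nonpos (le_of_lt hcr) h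
    linarith
  have hcrne : cr ≠ 0 := ne_of_gt hcr
  have hPcr : a - α * b = P * cr := by
    have h : cr * (a - α * b) = cr * (P * cr) := by linear_combination idA - α * idB - P * id3
    exact mul_left_cancel₀ hcrne h
  have hQcr : b - α * a = Q * cr := by
    have h : cr * (b - α * a) = cr * (Q * cr) := by linear_combination idB - α * idA - Q * id3
    exact mul_left_cancel₀ hcrne h
  set t : ℝ := α * a - b with htdef
  have ht_pos : 0 < t := by
    have h : t = -Q * cr := by rw [htdef]; linear_combination -hQcr
    rw [h]; exact mul_pos (by linarith) hcr
  have htsq : t ^ 2 = (1 - α ^ 2) * (1 - a ^ 2) := by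
    have h : t = -Q * cr := by rw [htdef]; linear_combination -hQcr
    rw [h]
    have h2 : (-Q * cr) ^ 2 = Q ^ 2 * cr ^ 2 := by ring
    rw [h2, id3]
    nlinarith [hQsq]
  have hm : 0 < 1 - α ^ 2 := by nlinarith
  have hstep : -α * t < a * (1 - α ^ 2) := by
    have h : a - α * b = a * (1 - α ^ 2) + α * t := by rw [htdef]; ring
    have h2 : 0 < P * cr := mul_pos hP hcr
    nlinarith [hPcr]
  have hnn : 0 ≤ -α * t := mul_nonneg (by linarith) (le_of_lt ht_pos)
  have ha2 : α ^ 2 < a ^ 2 := by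
    have hA : α ^ 2 * t ^ 2 < a ^ 2 * (1 - α ^ 2) ^ 2 := by
      nlinarith [mul_self_lt_mul_self hnn hstep]
    rw [htsq] at hA
    have hC : α ^ 2 * (1 - a ^ 2) < a ^ 2 * (1 - α ^ 2) := by nlinarith [hA, hm]
    nlinarith [hC]
  have h1a : t ≤ α * (a - 1) := by nlinarith
  have hαneg : α < 0 := by
    rcases lt_or_eq_of_le hαle with h | h
    · exact h
    · exfalso; subst h; nlinarith
  have ha1 : a < 1 := by
    by_contra h
    push_neg at h
    have h2 : α * (a - 1) ≤ 0 := mul_nonpos_of_nonpos_of_nonneg (le_of_lt hαneg) (by linarith)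
    linarith
  have hfin : a ≤ 2 * α ^ 2 - 1 := by
    have hsq : t ^ 2 ≤ (α * (a - 1)) ^ 2 := by
      nlinarith [mul_self_le_mul_self (le_of_lt ht_pos) h1a]
    have key : (1 - a) * ((1 - α ^ 2) * (1 + a) - α ^ 2 * (1 - a)) ≤ 0 := by nlinarith [hsq, htsq]
    have h2 : (1 - α ^ 2) * (1 + a) - α ^ 2 * (1 - a) ≤ 0 := by
      by_contra h3
      push_neg at h3
      have := mul_pos (show (0:ℝ) < 1 - a by linarith) h3
      linarith
    nlinarith [h2]
  have hagt : -α < a := by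
    by_contra h
    push_neg at h
    have h2 : a * a ≤ (-α) * (-α) := mul_self_le_mul_self (le_of_lt ha_pos) h
    nlinarith [h2]
  have hprod : (2 * α - 1) * (α + 1) < 0 :=
    mul_neg_of_neg_of_pos (by linarith) (by linarith)
  nlinarith [hprod]

lemma aux_P (d e x : ℝ × ℝ) (hd : dotp d d = 1) (he : dotp e e = 1) (hx : dotp x x = 1)
    (hcr : 0 < crossp d e) (ha : dotp d e ≤ dotp x d) (hb : dotp d e ≤ dotp x e)
    (hsum : dotp x d + dotp x e ≤ 0) : crossp x e ≤ 0 := by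
  by_contra hP
  push_neg at hP
  simp only [dotp, crossp] at *
  refine scalar_aux (d.1 * e.1 + d.2 * e.2) (d.1 * e.2 - d.2 * e.1)
    (x.1 * e.2 - x.2 * e.1) (d.1 * x.2 - d.2 * x.1)
    (x.1 * d.1 + x.2 * d.2) (x.1 * e.1 + x.2 * e.2)
    ?_ ?_ ?_ ?_ hcr ha hb hsum hP
  · linear_combination (x.1 * e.2 - x.2 * e.1) * hd
  · linear_combination (d.1 * x.2 - d.2 * x.1) * he
  · linear_combination (e.1 * e.1 + e.2 * e.2) * hd + he
  · linear_combination (x.1 * x.1 + x.2 * x.2) * hd + hx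

/-- reflection about the x-axis -/
def reflp (a : ℝ × ℝ) : ℝ × ℝ := (a.1, -a.2)

lemma aux_Q (d e x : ℝ × ℝ) (hd : dotp d d = 1) (he : dotp e e = 1) (hx : dotp x x = 1)
    (hcr : 0 < crossp d e) (ha : dotp d e ≤ dotp x d) (hb : dotp d e ≤ dotp x e)
    (hsum : dotp x d + dotp x e ≤ 0) : crossp d x ≤ 0 := by
  have h := aux_P (reflp e) (reflp d) (reflp x) (by simpa [reflp, dotp] using he)
    (by simpa [reflp, dotp] using hd) (by simpa [reflp, dotp] using hx)
    (by simp only [reflp, crossp] at *; nlinarith)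
    (by simp only [reflp, dotp, crossp] at *; nlinarith)
    (by simp only [reflp, dotp, crossp] at *; nlinarith)
    (by simp only [reflp, dotp, crossp] at *; nlinarith)
  simp only [reflp, crossp] at h ⊢
  nlinarith

/-- From three non-collinear points of a convex set we get an interior point. -/
lemma interior_point (S : Set (ℝ × ℝ)) (hS : Convex ℝ S) (q1 q2 q3 : ℝ × ℝ)
    (h1 : q1 ∈ S) (h2 : q2 ∈ S) (h3 : q3 ∈ S)
    (hD : crossp (q2 - q1) (q3 - q1) ≠ 0) : (interior S).Nonempty := by
  set D : ℝ := crossp (q2 - q1) (q3 - q1) with hDdef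
  set A : ℝ × ℝ → ℝ := fun w => crossp (w - q1) (q3 - q1) / D with hAdef
  set B : ℝ × ℝ → ℝ := fun w => crossp (q2 - q1) (w - q1) / D with hBdef
  have hAcont : Continuous A := by
    rw [hAdef]; simp only [crossp, Prod.fst_sub, Prod.snd_sub]; fun_prop
  have hBcont : Continuous B := by
    rw [hBdef]; simp only [crossp, Prod.fst_sub, Prod.snd_sub]; fun_prop
  have hmem : ∀ w, 0 < A w → 0 < B w → A w + B w < 1 → w ∈ S := by
    intro w ha hb hab
    set a := A w with hadef
    set b := B w with hbdef
    have habpos : 0 < a + b := by linarith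
    have hy : (a / (a + b)) • q2 + (b / (a + b)) • q3 ∈ S :=
      hS h2 h3 (div_nonneg ha.le habpos.le) (div_nonneg hb.le habpos.le)
        (by field_simp)
    have hw : (1 - (a + b)) • q1 + (a + b) • ((a / (a + b)) • q2 + (b / (a + b)) • q3) ∈ S :=
      hS h1 hy (by linarith) habpos.le (by ring)
    have heq : (1 - (a + b)) • q1 + (a + b) • ((a / (a + b)) • q2 + (b / (a + b)) • q3) = w := by
      have hane : a + b ≠ 0 := ne_of_gt habpos
      have haeq : a * D = crossp (w - q1) (q3 - q1) := by
        rw [hadef, hAdef]; field_simp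
      have hbeq : b * D = crossp (q2 - q1) (w - q1) := by
        rw [hbdef, hBdef]; field_simp
      have hDne : ((q2.1 - q1.1) * (q3.2 - q1.2) - (q2.2 - q1.2) * (q3.1 - q1.1)) ≠ 0 := by
        rw [hDdef] at hD
        simpa [crossp, Prod.fst_sub, Prod.snd_sub] using hD
      simp only [crossp, Prod.fst_sub, Prod.snd_sub, hDdef] at haeq hbeq
      have hc1 : (a + b) * (a / (a + b)) = a := by field_simp
      have hc2 : (a + b) * (b / (a + b)) = b := by field_simp
      have hcomb : (1 - (a + b)) • q1 + (a + b) • ((a / (a + b)) • q2 + (b / (a + b)) • q3)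
          = (1 - a - b) • q1 + (a • q2 + b • q3) := by
        rw [smul_add, smul_smul, smul_smul, hc1, hc2, show 1 - (a + b) = 1 - a - b by ring]
      rw [hcomb]
      apply Prod.ext
      · simp only [Prod.fst_add, Prod.smul_fst, smul_eq_mul]
        apply mul_left_cancel₀ hDne
        linear_combination (q2.1 - q1.1) * haeq + (q3.1 - q1.1) * hbeq
      · simp only [Prod.snd_add, Prod.smul_snd, smul_eq_mul]
        apply mul_left_cancel₀ hDne
        linear_combination (q2.2 - q1.2) * haeq + (q3.2 - q1.2) * hbeq
    rw [heq] at hw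
    exact hw
  set z : ℝ × ℝ := q1 + (3:ℝ)⁻¹ • ((q2 - q1) + (q3 - q1)) with hzdef
  have hAz : A z = 1/3 := by
    have hnum : crossp (z - q1) (q3 - q1) = D / 3 := by
      rw [hzdef, hDdef]
      simp only [crossp, Prod.fst_sub, Prod.snd_sub, Prod.fst_add, Prod.snd_add,
        Prod.smul_fst, Prod.smul_snd, smul_eq_mul]
      ring
    rw [hAdef]
    simp only
    rw [hnum]
    field_simp
  have hBz : B z = 1/3 := by
    have hnum : crossp (q2 - q1) (z - q1) = D / 3 := by
      rw [hzdef, hDdef]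
      simp only [crossp, Prod.fst_sub, Prod.snd_sub, Prod.fst_add, Prod.snd_add,
        Prod.smul_fst, Prod.smul_snd, smul_eq_mul]
      ring
    rw [hBdef]
    simp only
    rw [hnum]
    field_simp
  refine ⟨z, ?_⟩
  rw [mem_interior]
  refine ⟨{w | 0 < A w ∧ 0 < B w ∧ A w + B w < 1}, ?_, ?_, ?_⟩
  · intro w hw; exact hmem w hw.1 hw.2.1 hw.2.2
  · have o1 : IsOpen {w | 0 < A w} := isOpen_lt continuous_const hAcont
    have o2 : IsOpen {w | 0 < B w} := isOpen_lt continuous_const hBcont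
    have o3 : IsOpen {w | A w + B w < 1} := isOpen_lt (hAcont.add hBcont) continuous_const
    rw [Set.setOf_and, Set.setOf_and]
    exact o1.inter (o2.inter o3)
  · exact ⟨by rw [hAz]; norm_num, by rw [hBz]; norm_num, by rw [hAz, hBz]; norm_num⟩

set_option maxHeartbeats 2000000 in
lemma caseB (S : Set (ℝ × ℝ)) (hS : Convex ℝ S) (z : ℝ × ℝ) (hz : z ∈ interior S)
    (hnl : ∀ q e : ℝ × ℝ, e ≠ 0 → ¬ ∀ s : ℝ, q + s • e ∈ S)
    (hcon : ∀ m n : ℤ, (m, n) ≠ (0, 0) → ∀ M : ℝ, ∃ p ∈ S, (m : ℝ) * p.1 + (n : ℝ) * p.2 < M) :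
    False := by
  have hzS : z ∈ S := interior_subset hz
  have hTc : IsClosed (closure S) := isClosed_closure
  have hTconv : Convex ℝ (closure S) := hS.closure
  -- no full line inside the closure (through z)
  have haveline : ∀ e : ℝ × ℝ, e ≠ 0 → ¬ (∀ t : ℝ, z + t • e ∈ closure S) := by
    intro e he hL
    apply hnl z e he
    intro s
    rcases eq_or_ne s 0 with rfl | hs
    · simpa using hzS
    · have h2 : z + (2 * s) • e ∈ closure S := hL (2 * s)
      have hseg : z + s • e ∈ openSegment ℝ z (z + (2 * s) • e) := by
        refine ⟨1/2, 1/2, by norm_num, by norm_num, by norm_num, ?_⟩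
        module
      exact interior_subset (hS.openSegment_interior_closure_subset_interior hz h2 hseg)
  -- the recession cone of the closure at z
  set C : Set (ℝ × ℝ) := {d | ∀ r : ℝ, 0 ≤ r → z + r • d ∈ closure S} with hCdef
  have hCclosed : IsClosed C := by
    have hrw : C = ⋂ r ∈ {r : ℝ | 0 ≤ r}, (fun d : ℝ × ℝ => z + r • d) ⁻¹' closure S := by
      ext d
      simp only [hCdef, mem_setOf_eq, mem_iInter, mem_preimage]
    rw [hrw]
    exact isClosed_biInter fun r hr => hTc.preimage (by fun_prop)
  have hCsmul : ∀ (c : ℝ), 0 ≤ c → ∀ d ∈ C, c • d ∈ C := by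
    intro c hc d hd r hr
    have h := hd (r * c) (mul_nonneg hr hc)
    rwa [smul_smul]
  have hCadd : ∀ d ∈ C, ∀ e ∈ C, d + e ∈ C := by
    intro d hd e he r hr
    have h1 := hd (2 * r) (by linarith)
    have h2 := he (2 * r) (by linarith)
    have h3 := hTconv h1 h2 (by norm_num : (0:ℝ) ≤ 1/2) (by norm_num : (0:ℝ) ≤ 1/2) (by norm_num)
    have heq : (1/2 : ℝ) • (z + (2 * r) • d) + (1/2 : ℝ) • (z + (2 * r) • e) = z + r • (d + e) := by
      module
    rwa [heq] at h3
  have hCpointed : ∀ d ∈ C, -d ∈ C → d = 0 := by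
    intro d hd hnd
    by_contra h0
    apply haveline d h0
    intro t
    rcases le_or_gt 0 t with ht | ht
    · exact hd t ht
    · have h := hnd (-t) (by linarith)
      have heq : (-t) • (-d) = t • d := by module
      rwa [heq] at h
  -- normalized directions of the cone
  set K : Set (ℝ × ℝ) := {d | d ∈ C ∧ dotp d d = 1} with hKdef
  have hKelim : ∀ y : ℝ × ℝ, y ∈ K → y ∈ C ∧ dotp y y = 1 := fun y hy => hy
  have hKintro : ∀ y : ℝ × ℝ, y ∈ C → dotp y y = 1 → y ∈ K := fun y h1 h2 => ⟨h1, h2⟩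
  have habs_of_K : ∀ d ∈ K, |d.1| ≤ 1 ∧ |d.2| ≤ 1 := by
    intro d hd
    have h1 : d.1 * d.1 + d.2 * d.2 = 1 := (hKelim d hd).2
    constructor
    · rw [abs_le]
      constructor <;> nlinarith [sq_nonneg d.1, sq_nonneg d.2, sq_nonneg (d.1 + 1), sq_nonneg (d.1 - 1)]
    · rw [abs_le]
      constructor <;> nlinarith [sq_nonneg d.1, sq_nonneg d.2, sq_nonneg (d.2 + 1), sq_nonneg (d.2 - 1)]
  have hKcompact : IsCompact K := by
    apply IsCompact.of_isClosed_subset (isCompact_closedBall (0 : ℝ × ℝ) 1)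
    · have hrw : K = C ∩ {d : ℝ × ℝ | dotp d d = 1} := rfl
      rw [hrw]
      refine hCclosed.inter (isClosed_eq ?_ continuous_const)
      simp only [dotp]
      fun_prop
    · intro d hd
      rw [mem_closedBall_zero_iff, Prod.norm_def]
      have h2 := habs_of_K d hd
      simp only [Real.norm_eq_abs]
      exact max_le h2.1 h2.2
  -- every nonzero integer direction admits a recession direction on which it is ≤ 0
  have hdirlim : ∀ m n : ℤ, (m, n) ≠ (0, 0) → ∃ d ∈ K, (m : ℝ) * d.1 + (n : ℝ) * d.2 ≤ 0 := by
    intro m n hmn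
    have hseq : ∀ k : ℕ, ∃ p ∈ S, (m : ℝ) * p.1 + (n : ℝ) * p.2 < -(k : ℝ) :=
      fun k => hcon m n hmn (-(k : ℝ))
    choose p hpS hplt using hseq
    set A : ℝ := |(m : ℝ)| + |(n : ℝ)| with hAdef
    have hA1 : 1 ≤ A := by
      have hor : m ≠ 0 ∨ n ≠ 0 := by
        by_contra h
        push_neg at h
        exact hmn (by rw [h.1, h.2])
      rcases hor with h | h
      · have h1 : (1 : ℤ) ≤ |m| := Int.one_le_abs h
        have h2 : (1 : ℝ) ≤ |(m : ℝ)| := by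
          rw [← Int.cast_abs]; exact_mod_cast h1
        have h3 : 0 ≤ |(n : ℝ)| := abs_nonneg _
        rw [hAdef]; linarith
      · have h1 : (1 : ℤ) ≤ |n| := Int.one_le_abs h
        have h2 : (1 : ℝ) ≤ |(n : ℝ)| := by
          rw [← Int.cast_abs]; exact_mod_cast h1
        have h3 : 0 ≤ |(m : ℝ)| := abs_nonneg _
        rw [hAdef]; linarith
    have hApos : 0 < A := lt_of_lt_of_le one_pos hA1
    set L : ℝ × ℝ → ℝ := fun v => (m : ℝ) * v.1 + (n : ℝ) * v.2 with hLdef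
    have hbound : ∀ v : ℝ × ℝ, |L v| ≤ A * ‖v‖ := by
      intro v
      have h1 : |v.1| ≤ ‖v‖ := by
        rw [Prod.norm_def]; simp only [Real.norm_eq_abs]; exact le_max_left _ _
      have h2 : |v.2| ≤ ‖v‖ := by
        rw [Prod.norm_def]; simp only [Real.norm_eq_abs]; exact le_max_right _ _
      simp only [hLdef]
      calc |(m : ℝ) * v.1 + (n : ℝ) * v.2| ≤ |(m : ℝ) * v.1| + |(n : ℝ) * v.2| := abs_add_le _ _
        _ = |(m : ℝ)| * |v.1| + |(n : ℝ)| * |v.2| := by rw [abs_mul, abs_mul]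
        _ ≤ |(m : ℝ)| * ‖v‖ + |(n : ℝ)| * ‖v‖ := by
            have hm0 := abs_nonneg (m : ℝ)
            have hn0 := abs_nonneg (n : ℝ)
            gcongr
        _ = A * ‖v‖ := by rw [hAdef]; ring
    have hLsub : ∀ v : ℝ × ℝ, L (v - z) = L v - L z := by
      intro v; simp only [hLdef, Prod.fst_sub, Prod.snd_sub]; ring
    have hdz : Tendsto (fun k => ‖p k - z‖) atTop atTop := by
      have hgrow : Tendsto (fun k : ℕ => ((k : ℝ) + L z) / A) atTop atTop :=
        Tendsto.atTop_div_const hApos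
          (tendsto_atTop_add_const_right atTop (L z) tendsto_natCast_atTop_atTop)
      apply tendsto_atTop_mono' atTop _ hgrow
      apply Filter.Eventually.of_forall
      intro k
      simp only
      rw [div_le_iff₀ hApos]
      have h1 : (k : ℝ) + L z < -(L (p k - z)) := by
        have h2 := hplt k
        rw [hLsub]
        simp only [hLdef] at *
        linarith
      have h2 := hbound (p k - z)
      have h3 : -(L (p k - z)) ≤ |L (p k - z)| := neg_le_abs _
      nlinarith [h1, h2, h3]
    obtain ⟨k0, hk0⟩ : ∃ k0 : ℕ, ∀ k ≥ k0, 1 ≤ ‖p k - z‖ := by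
      have h := hdz.eventually_ge_atTop 1
      rw [eventually_atTop] at h
      exact h
    set q : ℕ → ℝ × ℝ := fun k => p (k + k0) with hqdef
    set dn : ℕ → ℝ × ℝ := fun k => ‖q k - z‖⁻¹ • (q k - z) with hdndef
    have hqnorm : ∀ k, 1 ≤ ‖q k - z‖ := fun k => hk0 (k + k0) (by omega)
    have hdn_sphere : ∀ k, dn k ∈ sphere (0 : ℝ × ℝ) 1 := by
      intro k
      have h1 := hqnorm k
      rw [mem_sphere_zero_iff_norm]
      simp only [hdndef, norm_smul, norm_inv, norm_norm]
      rw [inv_mul_cancel₀ (by linarith : ‖q k - z‖ ≠ 0)]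
    obtain ⟨d, hdsph, φ, hφmono, hφtend⟩ :=
      (isCompact_sphere (0 : ℝ × ℝ) 1).tendsto_subseq hdn_sphere
    have hqtend : Tendsto (fun k => ‖q k - z‖) atTop atTop := by
      have h1 : Tendsto (fun k : ℕ => k + k0) atTop atTop := tendsto_add_atTop_nat k0
      exact hdz.comp h1
    have hqφtend : Tendsto (fun j => ‖q (φ j) - z‖) atTop atTop :=
      hqtend.comp hφmono.tendsto_atTop
    -- the limit direction is in the cone
    have hdC : d ∈ C := by
      intro r hr
      have htends : Tendsto (fun j => z + r • dn (φ j)) atTop (𝓝 (z + r • d)) :=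
        (hφtend.const_smul r).const_add z
      apply hTc.mem_of_tendsto htends
      filter_upwards [hqφtend.eventually_ge_atTop r] with j hj
      have hR1 : 1 ≤ ‖q (φ j) - z‖ := hqnorm (φ j)
      have hRpos : 0 < ‖q (φ j) - z‖ := by linarith
      have hθ1 : 0 ≤ r / ‖q (φ j) - z‖ := div_nonneg hr hRpos.le
      have hθ2 : r / ‖q (φ j) - z‖ ≤ 1 := by rw [div_le_one hRpos]; exact hj
      have hqT : q (φ j) ∈ closure S := subset_closure (hpS (φ j + k0))
      have hmem := hTconv (subset_closure hzS) hqT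
        (by linarith : (0:ℝ) ≤ 1 - r / ‖q (φ j) - z‖) hθ1 (by ring)
      have heq : (1 - r / ‖q (φ j) - z‖) • z + (r / ‖q (φ j) - z‖) • q (φ j)
          = z + r • dn (φ j) := by
        simp only [hdndef]
        rw [smul_smul]
        rw [show r * ‖q (φ j) - z‖⁻¹ = r / ‖q (φ j) - z‖ from (div_eq_mul_inv r _).symm]
        module
      rwa [heq] at hmem
    -- the functional is ≤ 0 on the limit direction
    have hLd : L d ≤ 0 := by
      have hcont : Continuous L := by simp only [hLdef]; fun_prop
      have htends : Tendsto (fun j => L (dn (φ j))) atTop (𝓝 (L d)) :=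
        (hcont.tendsto d).comp hφtend
      apply le_of_tendsto htends
      obtain ⟨j1, hj1⟩ := exists_nat_ge (-(L z))
      filter_upwards [eventually_ge_atTop j1] with j hj
      have hφj : j1 ≤ φ j := le_trans hj hφmono.le_apply
      have h1 : L (q (φ j)) < -(((φ j : ℕ) : ℝ) + ((k0 : ℕ) : ℝ)) := by
        have h2 := hplt (φ j + k0)
        simp only [hqdef, hLdef] at *
        push_cast
        push_cast at h2
        linarith
      have h2 : -(((φ j : ℕ) : ℝ) + ((k0 : ℕ) : ℝ)) ≤ L z := by
        have h3 : (j1 : ℝ) ≤ ((φ j : ℕ) : ℝ) := by exact_mod_cast hφj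
        have hk0nn : (0:ℝ) ≤ ((k0 : ℕ) : ℝ) := Nat.cast_nonneg _
        linarith
      have h3 : L (q (φ j) - z) < 0 := by rw [hLsub]; linarith
      have h4 : L (dn (φ j)) = ‖q (φ j) - z‖⁻¹ * L (q (φ j) - z) := by
        simp only [hdndef, hLdef, Prod.smul_fst, Prod.smul_snd, smul_eq_mul]
        ring
      rw [h4]
      exact mul_nonpos_of_nonneg_of_nonpos (inv_nonneg.2 (norm_nonneg _)) h3.le
    -- normalize d (sup-norm sphere) to the euclidean circle
    have hdne : d ≠ 0 := by
      intro h0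
      rw [h0] at hdsph
      simp at hdsph
    have hddpos : 0 < dotp d d := by
      have h1 : d.1 ≠ 0 ∨ d.2 ≠ 0 := by
        by_contra h
        push_neg at h
        exact hdne (Prod.ext h.1 h.2)
      simp only [dotp]
      rcases h1 with h | h
      · nlinarith [sq_nonneg d.2, mul_self_pos.2 h]
      · nlinarith [sq_nonneg d.1, mul_self_pos.2 h]
    set cfac : ℝ := (Real.sqrt (dotp d d))⁻¹ with hcfac
    have hsq := Real.sq_sqrt hddpos.le
    have hsqrtpos : 0 < Real.sqrt (dotp d d) := Real.sqrt_pos.2 hddpos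
    have hcfacpos : 0 < cfac := inv_pos.2 hsqrtpos
    refine ⟨cfac • d, hKintro _ (hCsmul cfac hcfacpos.le d hdC) ?_, ?_⟩
    · have hexp : dotp (cfac • d) (cfac • d) = cfac ^ 2 * dotp d d := by
        simp only [dotp, Prod.smul_fst, Prod.smul_snd, smul_eq_mul]
        ring
      rw [hexp, hcfac, inv_pow, hsq]
      field_simp
    · have hexp : (m : ℝ) * (cfac • d).1 + (n : ℝ) * (cfac • d).2 = cfac * L d := by
        simp only [hLdef, Prod.smul_fst, Prod.smul_snd, smul_eq_mul]; ring
      rw [hexp]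
      exact mul_nonpos_of_nonneg_of_nonpos hcfacpos.le hLd
  -- K is nonempty
  obtain ⟨d0, hd0K, _⟩ := hdirlim 1 0 (by simp)
  -- minimize the dot product over K × K
  have hKKcomp : IsCompact (K ×ˢ K) := hKcompact.prod hKcompact
  have hKKne : (K ×ˢ K).Nonempty := ⟨(d0, d0), Set.mem_prod.2 ⟨hd0K, hd0K⟩⟩
  have hcontdot : ContinuousOn (fun q : (ℝ × ℝ) × (ℝ × ℝ) => dotp q.1 q.2) (K ×ˢ K) := by
    apply Continuous.continuousOn
    simp only [dotp]
    fun_prop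
  obtain ⟨de, hdeK, hmin⟩ := hKKcomp.exists_isMinOn hKKne hcontdot
  obtain ⟨d1, e1⟩ := de
  rw [Set.mem_prod] at hdeK
  have hd1K : d1 ∈ K := hdeK.1
  have he1K : e1 ∈ K := hdeK.2
  have hminle : ∀ x ∈ K, ∀ y ∈ K, dotp d1 e1 ≤ dotp x y := by
    intro x hx y hy
    exact isMinOn_iff.mp hmin (x, y) (Set.mem_prod.2 ⟨hx, hy⟩)
  have hdotsymm : ∀ x y : ℝ × ℝ, dotp x y = dotp y x := by
    intro x y; simp only [dotp]; ring
  -- the sum w = d1 + e1 is strictly positive on K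
  set w : ℝ × ℝ := d1 + e1 with hwdef
  have hwpos : ∀ x ∈ K, 0 < dotp w x := by
    intro x hx
    by_contra hle
    push_neg at hle
    have hsum : dotp x d1 + dotp x e1 ≤ 0 := by
      have h : dotp w x = dotp x d1 + dotp x e1 := by
        rw [hwdef]; simp only [dotp, Prod.fst_add, Prod.snd_add]; ring
      rw [h] at hle
      exact hle
    have hxd1 : dotp d1 e1 ≤ dotp x d1 := hminle x hx d1 hd1K
    have hxe1 : dotp d1 e1 ≤ dotp x e1 := hminle x hx e1 he1K
    have hu1 := (hKelim d1 hd1K).2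
    have hu2 := (hKelim e1 he1K).2
    have hux := (hKelim x hx).2
    have hLag : crossp d1 e1 ^ 2 + dotp d1 e1 ^ 2 = 1 := by
      simp only [dotp, crossp] at hu1 hu2 ⊢
      linear_combination (e1.1 * e1.1 + e1.2 * e1.2) * hu1 + hu2
    rcases lt_trichotomy (crossp d1 e1) 0 with hcr | hcr | hcr
    · -- use the pair (e1, d1)
      have hcr' : 0 < crossp e1 d1 := by
        simp only [crossp] at *; linarith
      have hP := aux_P e1 d1 x hu2 hu1 hux hcr'
        (by rw [hdotsymm e1 d1]; exact hxe1) (by rw [hdotsymm e1 d1]; exact hxd1)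
        (by linarith)
      have hQ := aux_Q e1 d1 x hu2 hu1 hux hcr'
        (by rw [hdotsymm e1 d1]; exact hxe1) (by rw [hdotsymm e1 d1]; exact hxd1)
        (by linarith)
      -- hP : crossp x d1 ≤ 0, hQ : crossp e1 x ≤ 0
      have hcrne : crossp e1 d1 ≠ 0 := ne_of_gt hcr'
      have hβnn : 0 ≤ -(crossp x d1) / crossp e1 d1 := div_nonneg (by linarith) hcr'.le
      have hγnn : 0 ≤ -(crossp e1 x) / crossp e1 d1 := div_nonneg (by linarith) hcr'.le
      have hrep : -x = (-(crossp x d1) / crossp e1 d1) • e1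
          + (-(crossp e1 x) / crossp e1 d1) • d1 := by
        apply Prod.ext
        · simp only [Prod.fst_add, Prod.smul_fst, smul_eq_mul, Prod.fst_neg]
          rw [div_mul_eq_mul_div, div_mul_eq_mul_div, ← add_div, eq_div_iff hcrne]
          simp only [crossp]
          ring
        · simp only [Prod.snd_add, Prod.smul_snd, smul_eq_mul, Prod.snd_neg]
          rw [div_mul_eq_mul_div, div_mul_eq_mul_div, ← add_div, eq_div_iff hcrne]
          simp only [crossp]
          ring
      have hnegxC : -x ∈ C := by
        rw [hrep]
        exact hCadd _ (hCsmul _ hβnn e1 (hKelim e1 he1K).1) _ (hCsmul _ hγnn d1 (hKelim d1 hd1K).1)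
      have hx0 := hCpointed x (hKelim x hx).1 hnegxC
      rw [hx0] at hux
      simp [dotp] at hux
    · -- cross = 0: degenerate case
      have hα2 : (dotp d1 e1 - 1) * (dotp d1 e1 + 1) = 0 := by nlinarith [hLag, hcr]
      rcases mul_eq_zero.mp hα2 with h | h
      · have h1 : dotp d1 e1 = 1 := by linarith [sub_eq_zero.mp h]
        linarith [hxd1, hxe1, h1 ▸ hxd1]
      · have h1 : dotp d1 e1 = -1 := by linarith
        have hsq0 : (d1.1 + e1.1)^2 + (d1.2 + e1.2)^2 = 0 := by
          simp only [dotp] at hu1 hu2 h1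
          nlinarith [hu1, hu2, h1]
        have he1d1 : e1 = -d1 := by
          have ha2 := sq_nonneg (d1.1 + e1.1)
          have hb2 := sq_nonneg (d1.2 + e1.2)
          have h2 : d1.1 + e1.1 = 0 := by nlinarith
          have h3 : d1.2 + e1.2 = 0 := by nlinarith
          apply Prod.ext
          · simp only [Prod.fst_neg]; linarith
          · simp only [Prod.snd_neg]; linarith
        have hnd1C : -d1 ∈ C := he1d1 ▸ (hKelim e1 he1K).1
        have h0 := hCpointed d1 (hKelim d1 hd1K).1 hnd1C
        rw [h0] at hu1
        simp [dotp] at hu1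
    · -- use the pair (d1, e1)
      have hP := aux_P d1 e1 x hu1 hu2 hux hcr hxd1 hxe1 (by linarith)
      have hQ := aux_Q d1 e1 x hu1 hu2 hux hcr hxd1 hxe1 (by linarith)
      -- hP : crossp x e1 ≤ 0, hQ : crossp d1 x ≤ 0
      have hcrne : crossp d1 e1 ≠ 0 := ne_of_gt hcr
      have hβnn : 0 ≤ -(crossp x e1) / crossp d1 e1 := div_nonneg (by linarith) hcr.le
      have hγnn : 0 ≤ -(crossp d1 x) / crossp d1 e1 := div_nonneg (by linarith) hcr.le
      have hrep : -x = (-(crossp x e1) / crossp d1 e1) • d1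
          + (-(crossp d1 x) / crossp d1 e1) • e1 := by
        apply Prod.ext
        · simp only [Prod.fst_add, Prod.smul_fst, smul_eq_mul, Prod.fst_neg]
          rw [div_mul_eq_mul_div, div_mul_eq_mul_div, ← add_div, eq_div_iff hcrne]
          simp only [crossp]
          ring
        · simp only [Prod.snd_add, Prod.smul_snd, smul_eq_mul, Prod.snd_neg]
          rw [div_mul_eq_mul_div, div_mul_eq_mul_div, ← add_div, eq_div_iff hcrne]
          simp only [crossp]
          ring
      have hnegxC : -x ∈ C := by
        rw [hrep]
        exact hCadd _ (hCsmul _ hβnn d1 (hKelim d1 hd1K).1) _ (hCsmul _ hγnn e1 (hKelim e1 he1K).1)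
      have hx0 := hCpointed x (hKelim x hx).1 hnegxC
      rw [hx0] at hux
      simp [dotp] at hux
  -- minimum value of dotp w over K
  have hcontw : ContinuousOn (fun x => dotp w x) K := by
    apply Continuous.continuousOn
    simp only [dotp]
    fun_prop
  obtain ⟨dmin, hdminK, hminw⟩ := hKcompact.exists_isMinOn ⟨d0, hd0K⟩ hcontw
  have hcpos : 0 < dotp w dmin := hwpos dmin hdminK
  set c : ℝ := dotp w dmin with hcdef
  have hwc : ∀ x ∈ K, c ≤ dotp w x := fun x hx => isMinOn_iff.mp hminw x hx
  -- integer approximation of w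
  obtain ⟨N, hN⟩ := exists_nat_gt (2 / c)
  have hNc : 2 < (N : ℝ) * c := by
    rw [div_lt_iff₀ hcpos] at hN
    linarith
  have hNpos : 0 < (N : ℝ) := by
    by_contra h
    push_neg at h
    nlinarith [hNc, hcpos]
  set mi : ℤ := round ((N : ℝ) * w.1) with hmidef
  set ni : ℤ := round ((N : ℝ) * w.2) with hnidef
  have hmr : |(N : ℝ) * w.1 - (mi : ℝ)| ≤ 1/2 := abs_sub_round _
  have hnr : |(N : ℝ) * w.2 - (ni : ℝ)| ≤ 1/2 := abs_sub_round _
  have hd0abs := habs_of_K d0 hd0K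
  have hmn0 : (mi, ni) ≠ (0, 0) := by
    intro hmn0
    have hmi0 : mi = 0 := congrArg Prod.fst hmn0
    have hni0 : ni = 0 := congrArg Prod.snd hmn0
    rw [hmi0] at hmr
    rw [hni0] at hnr
    simp only [Int.cast_zero, sub_zero] at hmr hnr
    have h1 : c ≤ dotp w d0 := hwc d0 hd0K
    have h2 : (N : ℝ) * dotp w d0 ≤ |(N : ℝ) * w.1| + |(N : ℝ) * w.2| := by
      have e1 : (N : ℝ) * dotp w d0
          = ((N : ℝ) * w.1) * d0.1 + ((N : ℝ) * w.2) * d0.2 := by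
        simp only [dotp]; ring
      rw [e1]
      have b1 : ((N : ℝ) * w.1) * d0.1 ≤ |(N : ℝ) * w.1| := by
        calc ((N : ℝ) * w.1) * d0.1 ≤ |((N : ℝ) * w.1) * d0.1| := le_abs_self _
          _ = |(N : ℝ) * w.1| * |d0.1| := abs_mul _ _
          _ ≤ |(N : ℝ) * w.1| * 1 := by
              have h3 := abs_nonneg ((N : ℝ) * w.1)
              exact mul_le_mul_of_nonneg_left hd0abs.1 h3
          _ = |(N : ℝ) * w.1| := mul_one _
      have b2 : ((N : ℝ) * w.2) * d0.2 ≤ |(N : ℝ) * w.2| := by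
        calc ((N : ℝ) * w.2) * d0.2 ≤ |((N : ℝ) * w.2) * d0.2| := le_abs_self _
          _ = |(N : ℝ) * w.2| * |d0.2| := abs_mul _ _
          _ ≤ |(N : ℝ) * w.2| * 1 := by
              have h3 := abs_nonneg ((N : ℝ) * w.2)
              exact mul_le_mul_of_nonneg_left hd0abs.2 h3
          _ = |(N : ℝ) * w.2| := mul_one _
      linarith
    have h3 : (N : ℝ) * c ≤ (N : ℝ) * dotp w d0 := mul_le_mul_of_nonneg_left h1 hNpos.le
    linarith
  -- final contradiction
  obtain ⟨dd, hddK, hddle⟩ := hdirlim mi ni hmn0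
  have hddabs := habs_of_K dd hddK
  have hcdd : c ≤ dotp w dd := hwc dd hddK
  have hkey : (mi : ℝ) * dd.1 + (ni : ℝ) * dd.2
      = (N : ℝ) * dotp w dd + ((mi : ℝ) - (N : ℝ) * w.1) * dd.1
        + ((ni : ℝ) - (N : ℝ) * w.2) * dd.2 := by
    simp only [dotp]
    ring
  have hb1 : -(1/2 : ℝ) ≤ ((mi : ℝ) - (N : ℝ) * w.1) * dd.1 := by
    have h1 : |((mi : ℝ) - (N : ℝ) * w.1) * dd.1| ≤ 1/2 := by
      rw [abs_mul]
      calc |(mi : ℝ) - (N : ℝ) * w.1| * |dd.1| ≤ (1/2) * 1 := by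
            apply mul_le_mul _ hddabs.1 (abs_nonneg _) (by norm_num)
            rw [abs_sub_comm]; exact hmr
        _ = 1/2 := by norm_num
    linarith [neg_abs_le (((mi : ℝ) - (N : ℝ) * w.1) * dd.1)]
  have hb2 : -(1/2 : ℝ) ≤ ((ni : ℝ) - (N : ℝ) * w.2) * dd.2 := by
    have h1 : |((ni : ℝ) - (N : ℝ) * w.2) * dd.2| ≤ 1/2 := by
      rw [abs_mul]
      calc |(ni : ℝ) - (N : ℝ) * w.2| * |dd.2| ≤ (1/2) * 1 := by
            apply mul_le_mul _ hddabs.2 (abs_nonneg _) (by norm_num)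
            rw [abs_sub_comm]; exact hnr
        _ = 1/2 := by norm_num
    linarith [neg_abs_le (((ni : ℝ) - (N : ℝ) * w.2) * dd.2)]
  have h4 : (N : ℝ) * c ≤ (N : ℝ) * dotp w dd := mul_le_mul_of_nonneg_left hcdd hNpos.le
  linarith [hkey, hddle]

set_option maxHeartbeats 1000000 in
theorem keythm (S : Set (ℝ × ℝ)) (hS : Convex ℝ S)
    (hnl : ∀ q e : ℝ × ℝ, e ≠ 0 → ¬ ∀ s : ℝ, q + s • e ∈ S) :
    ∃ m n : ℤ, (m, n) ≠ (0, 0) ∧ ∃ M : ℝ, ∀ p ∈ S, M ≤ (m : ℝ) * p.1 + (n : ℝ) * p.2 := by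
  by_contra hcon
  push_neg at hcon
  have hx1 : ∀ M : ℝ, ∃ p ∈ S, p.1 < M := by
    intro M
    obtain ⟨p, hp, h⟩ := hcon 1 0 (by simp) M
    refine ⟨p, hp, ?_⟩
    push_cast at h
    linarith
  have hx2 : ∀ M : ℝ, ∃ p ∈ S, M < p.1 := by
    intro M
    obtain ⟨p, hp, h⟩ := hcon (-1) 0 (by simp) (-M)
    refine ⟨p, hp, ?_⟩
    push_cast at h
    linarith
  obtain ⟨q1, hq1S, _⟩ := hx1 0
  by_cases hcol : ∃ q2 ∈ S, ∃ q3 ∈ S, crossp (q2 - q1) (q3 - q1) ≠ 0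
  · obtain ⟨q2, hq2S, q3, hq3S, hcr⟩ := hcol
    obtain ⟨z, hz⟩ := interior_point S hS q1 q2 q3 hq1S hq2S hq3S hcr
    exact caseB S hS z hz hnl hcon
  · push_neg at hcol
    -- all of S lies on the line through q1 and q2
    obtain ⟨q2, hq2S, hq2lt⟩ := hx1 q1.1
    set d : ℝ × ℝ := q2 - q1 with hddef
    have hd1neg : d.1 < 0 := by
      rw [hddef]; simp only [Prod.fst_sub]; linarith
    have hd0 : d ≠ 0 := by
      intro h
      have := congrArg Prod.fst h
      simp only [Prod.fst_zero] at this
      linarith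
    have hDpos : 0 < dotp d d := by
      simp only [dotp]
      nlinarith [sq_nonneg d.2, mul_self_pos.2 (ne_of_lt hd1neg)]
    have hDne : dotp d d ≠ 0 := ne_of_gt hDpos
    have hrep : ∀ p ∈ S, p = q1 + (dotp (p - q1) d / dotp d d) • d := by
      intro p hp
      have hc := hcol q2 hq2S p hp
      rw [← hddef] at hc
      have key1 : (p.1 - q1.1) * dotp d d = (dotp (p - q1) d) * d.1 := by
        simp only [dotp, crossp, Prod.fst_sub, Prod.snd_sub] at hc ⊢
        linear_combination (-d.2) * hc
      have key2 : (p.2 - q1.2) * dotp d d = (dotp (p - q1) d) * d.2 := by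
        simp only [dotp, crossp, Prod.fst_sub, Prod.snd_sub] at hc ⊢
        linear_combination d.1 * hc
      apply Prod.ext
      · simp only [Prod.fst_add, Prod.smul_fst, smul_eq_mul]
        have h2 : dotp (p - q1) d / dotp d d * d.1 = p.1 - q1.1 := by
          rw [div_mul_eq_mul_div, ← key1, mul_div_assoc, div_self hDne, mul_one]
        linarith
      · simp only [Prod.snd_add, Prod.smul_snd, smul_eq_mul]
        have h2 : dotp (p - q1) d / dotp d d * d.2 = p.2 - q1.2 := by
          rw [div_mul_eq_mul_div, ← key2, mul_div_assoc, div_self hDne, mul_one]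
        linarith
    have hline_all : ∀ s : ℝ, q1 + s • d ∈ S := by
      intro s
      obtain ⟨pa, hpaS, hpa⟩ := hx1 (q1.1 + (s + 1) * d.1)
      obtain ⟨pb, hpbS, hpb⟩ := hx2 (q1.1 + (s - 1) * d.1)
      set τa : ℝ := dotp (pa - q1) d / dotp d d with hτadef
      set τb : ℝ := dotp (pb - q1) d / dotp d d with hτbdef
      have hpa_eq : pa = q1 + τa • d := hrep pa hpaS
      have hpb_eq : pb = q1 + τb • d := hrep pb hpbS
      have hpa1 : pa.1 = q1.1 + τa * d.1 := by
        conv_lhs => rw [hpa_eq]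
        simp only [Prod.fst_add, Prod.smul_fst, smul_eq_mul]
      have hpb1 : pb.1 = q1.1 + τb * d.1 := by
        conv_lhs => rw [hpb_eq]
        simp only [Prod.fst_add, Prod.smul_fst, smul_eq_mul]
      have hτa : s + 1 < τa := by
        by_contra h
        push_neg at h
        have h2 : (s + 1) * d.1 ≤ τa * d.1 := mul_le_mul_of_nonpos_right h hd1neg.le
        linarith
      have hτb : τb < s - 1 := by
        by_contra h
        push_neg at h
        have h2 : τb * d.1 ≤ (s - 1) * d.1 := mul_le_mul_of_nonpos_right h hd1neg.le
        linarith
      have hτab : 0 < τa - τb := by linarith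
      have hτabne : τa - τb ≠ 0 := ne_of_gt hτab
      set θ : ℝ := (s - τb) / (τa - τb) with hθdef
      have hθ0 : 0 ≤ θ := div_nonneg (by linarith) hτab.le
      have hθ1 : θ ≤ 1 := by
        rw [hθdef, div_le_one hτab]
        linarith
      have hmem := hS hpbS hpaS (by linarith : (0:ℝ) ≤ 1 - θ) hθ0 (by ring)
      have hscal : (1 - θ) * τb + θ * τa = s := by
        rw [hθdef]
        field_simp
        ring
      have heq : (1 - θ) • pb + θ • pa = q1 + s • d := by
        rw [hpa_eq, hpb_eq, ← hscal]
        module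
      rwa [heq] at hmem
    exact hnl q1 d hd0 hline_all

set_option maxHeartbeats 1000000 in
/-- If `Ω ⊂ ℝ²` is a convex set containing no affine line, then for any lattice
`Λ` (spanned over `ℤ` by a basis `u, v` of `ℝ²`) there exists a nonzero `λ ∈ Λ`
whose coefficient `c_λ = sup_{p∈Ω} (−λ·p)` is finite, i.e. the set
`{−λ·p : p ∈ Ω}` is bounded above. -/
theorem strongly_admissible_implies_admissible
    (Ω : Set (ℝ × ℝ)) (hconv : Convex ℝ Ω)
    (hline : ∀ p d : ℝ × ℝ, d ≠ 0 → ¬ ∀ s : ℝ, p + s • d ∈ Ω)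
    (u v : ℝ × ℝ) (huv : LinearIndependent ℝ ![u, v]) :
    ∃ m n : ℤ, (m, n) ≠ (0, 0) ∧
      BddAbove {c : ℝ | ∃ p ∈ Ω,
        c = -(((m : ℝ) • u + (n : ℝ) • v).1 * p.1 + ((m : ℝ) • u + (n : ℝ) • v).2 * p.2)} := by
  rw [linearIndependent_fin2] at huv
  simp only [Matrix.cons_val_one, Matrix.head_cons, Matrix.cons_val_zero] at huv
  have hvne : v ≠ 0 := huv.1
  have hpair : ∀ a b : ℝ, a • u + b • v = 0 → a = 0 ∧ b = 0 := by
    intro a b hab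
    rw [Prod.ext_iff] at hab
    simp only [Prod.fst_add, Prod.snd_add, Prod.smul_fst, Prod.smul_snd, smul_eq_mul,
      Prod.fst_zero, Prod.snd_zero] at hab
    rcases eq_or_ne a 0 with rfl | ha
    · refine ⟨rfl, ?_⟩
      have hb : b • v = 0 := by
        apply Prod.ext
        · simp only [Prod.smul_fst, smul_eq_mul, Prod.fst_zero]; linarith [hab.1]
        · simp only [Prod.smul_snd, smul_eq_mul, Prod.snd_zero]; linarith [hab.2]
      rcases smul_eq_zero.mp hb with h | h
      · exact h
      · exact absurd h hvne
    · exfalso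
      apply huv.2 (-b / a)
      apply Prod.ext
      · simp only [Prod.smul_fst, smul_eq_mul]
        field_simp
        linarith [hab.1]
      · simp only [Prod.smul_snd, smul_eq_mul]
        field_simp
        linarith [hab.2]
  have hdet : u.1 * v.2 - u.2 * v.1 ≠ 0 := by
    intro hD
    have h1 := hpair v.2 (-u.2) (by
      apply Prod.ext
      · simp only [Prod.fst_add, Prod.smul_fst, smul_eq_mul, Prod.fst_zero]
        linarith [hD]
      · simp only [Prod.snd_add, Prod.smul_snd, smul_eq_mul, Prod.snd_zero]
        ring)
    have h2 := hpair v.1 (-u.1) (by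
      apply Prod.ext
      · simp only [Prod.fst_add, Prod.smul_fst, smul_eq_mul, Prod.fst_zero]
        ring
      · simp only [Prod.snd_add, Prod.smul_snd, smul_eq_mul, Prod.snd_zero]
        have hv2 : v.2 = 0 := h1.1
        have hu2 : u.2 = 0 := by linarith [h1.2]
        rw [hv2, hu2]
        ring)
    apply hvne
    apply Prod.ext
    · simp only [Prod.fst_zero]; exact h2.1
    · simp only [Prod.snd_zero]; exact h1.1
  set D : ℝ := u.1 * v.2 - u.2 * v.1 with hDdef
  set f : ℝ × ℝ → ℝ × ℝ := fun p => (u.1 * p.1 + u.2 * p.2, v.1 * p.1 + v.2 * p.2) with hfdef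
  set g : ℝ × ℝ → ℝ × ℝ :=
    fun x => ((v.2 * x.1 - u.2 * x.2) / D, (-v.1 * x.1 + u.1 * x.2) / D) with hgdef
  have hgf : ∀ p, g (f p) = p := by
    intro p
    apply Prod.ext
    · simp only [hfdef, hgdef, hDdef]
      rw [div_eq_iff (show u.1 * v.2 - u.2 * v.1 ≠ 0 from hdet)]
      ring
    · simp only [hfdef, hgdef, hDdef]
      rw [div_eq_iff (show u.1 * v.2 - u.2 * v.1 ≠ 0 from hdet)]
      ring
  have hfg : ∀ x, f (g x) = x := by
    intro x
    apply Prod.ext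
    · simp only [hfdef, hgdef, hDdef]
      rw [← mul_div_assoc, ← mul_div_assoc, ← add_div, div_eq_iff (show u.1 * v.2 - u.2 * v.1 ≠ 0 from hdet)]
      ring
    · simp only [hfdef, hgdef, hDdef]
      rw [← mul_div_assoc, ← mul_div_assoc, ← add_div, div_eq_iff (show u.1 * v.2 - u.2 * v.1 ≠ 0 from hdet)]
      ring
  have hglin : ∀ (x y : ℝ × ℝ) (s : ℝ), g (x + s • y) = g x + s • g y := by
    intro x y s
    apply Prod.ext
    · simp only [hgdef, Prod.fst_add, Prod.snd_add, Prod.smul_fst, Prod.smul_snd,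
        smul_eq_mul]
      field_simp
      ring
    · simp only [hgdef, Prod.fst_add, Prod.snd_add, Prod.smul_fst, Prod.smul_snd,
        smul_eq_mul]
      field_simp
      ring
  have hSconv : Convex ℝ (f '' Ω) := by
    rintro p ⟨x, hx, rfl⟩ q ⟨y, hy, rfl⟩ a b ha hb hab
    refine ⟨a • x + b • y, hconv hx hy ha hb hab, ?_⟩
    apply Prod.ext
    · simp only [hfdef, Prod.fst_add, Prod.smul_fst, Prod.snd_add, Prod.smul_snd, smul_eq_mul]
      ring
    · simp only [hfdef, Prod.fst_add, Prod.smul_fst, Prod.snd_add, Prod.smul_snd, smul_eq_mul]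
      ring
  have hSnl : ∀ q e : ℝ × ℝ, e ≠ 0 → ¬ ∀ s : ℝ, q + s • e ∈ f '' Ω := by
    intro q e he hall
    have hgene : g e ≠ 0 := by
      intro h0
      apply he
      have h1 : f (g e) = e := hfg e
      rw [h0] at h1
      rw [← h1]
      apply Prod.ext
      · simp only [hfdef, Prod.fst_zero, Prod.snd_zero]; ring
      · simp only [hfdef, Prod.fst_zero, Prod.snd_zero]; ring
    apply hline (g q) (g e) hgene
    intro s
    obtain ⟨x, hx, hfx⟩ := hall s
    have h1 := congrArg g hfx
    rw [hgf, hglin] at h1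
    rw [← h1]
    exact hx
  obtain ⟨m, n, hmn, M, hM⟩ := keythm (f '' Ω) hSconv hSnl
  refine ⟨m, n, hmn, ⟨-M, ?_⟩⟩
  rintro c ⟨p, hp, rfl⟩
  have h1 := hM (f p) ⟨p, hp, rfl⟩
  have hval : (m : ℝ) * (f p).1 + (n : ℝ) * (f p).2
      = ((m : ℝ) • u + (n : ℝ) • v).1 * p.1 + ((m : ℝ) • u + (n : ℝ) • v).2 * p.2 := by
    simp only [hfdef, Prod.fst_add, Prod.snd_add, Prod.smul_fst, Prod.smul_snd, smul_eq_mul]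
    ring
  rw [hval] at h1
  linarith
end

section
/- The value (4/3)·∫₀^{π/6} √(cos t) dt lies strictly between 0.68 and 0.69. -/
open Real intervalIntegral

private lemma intpoly (a c d : ℝ) :
    (∫ t in (0:ℝ)..a, (1 + c * t ^ 2 + d * t ^ 4)) = a + c * a ^ 3 / 3 + d * a ^ 5 / 5 := by
  have h1 : IntervalIntegrable (fun _ : ℝ => (1:ℝ)) MeasureTheory.volume 0 a :=
    intervalIntegrable_const
  have h2 : IntervalIntegrable (fun t : ℝ => c * t ^ 2) MeasureTheory.volume 0 a :=
    (continuous_const.mul (continuous_pow 2)).intervalIntegrable _ _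
  have h3 : IntervalIntegrable (fun t : ℝ => d * t ^ 4) MeasureTheory.volume 0 a :=
    (continuous_const.mul (continuous_pow 4)).intervalIntegrable _ _
  rw [integral_add (h1.add h2) h3, integral_add h1 h2, integral_const_mul,
    integral_const_mul, integral_one, integral_pow, integral_pow]
  norm_num
  ring

private lemma sqrt_cos_lower {t : ℝ} (h0 : 0 ≤ t) (h1 : t ≤ 0.53) :
    1 + (-(1/4)) * t ^ 2 + (-(1/8)) * t ^ 4 ≤ Real.sqrt (Real.cos t) := by
  have hb : |Real.cos t - (1 - t ^ 2 / 2)| ≤ |t| ^ 4 * (5 / 96) :=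
    Real.cos_bound (by rw [abs_of_nonneg h0]; linarith)
  rw [abs_of_nonneg h0] at hb
  have hb' : 1 - t ^ 2 / 2 - t ^ 4 * (5 / 96) ≤ Real.cos t := by
    have := abs_le.mp hb; linarith [this.1]
  have hc : 0 ≤ 1 + (-(1/4)) * t ^ 2 + (-(1/8)) * t ^ 4 := by
    nlinarith [pow_le_pow_left₀ h0 h1 2, pow_le_pow_left₀ h0 h1 4]
  rw [show (1 + (-(1/4)) * t ^ 2 + (-(1/8)) * t ^ 4 : ℝ)
      = Real.sqrt ((1 + (-(1/4)) * t ^ 2 + (-(1/8)) * t ^ 4) ^ 2) from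
    (Real.sqrt_sq hc).symm]
  apply Real.sqrt_le_sqrt
  nlinarith [pow_le_pow_left₀ h0 h1 2, pow_le_pow_left₀ h0 h1 4, sq_nonneg t,
    pow_nonneg h0 4, pow_nonneg h0 6, pow_nonneg h0 8]

private lemma sqrt_cos_upper {t : ℝ} (h0 : 0 ≤ t) (h1 : t ≤ 0.53) :
    Real.sqrt (Real.cos t) ≤ 1 + (-(1/4)) * t ^ 2 + (1/48) * t ^ 4 := by
  have hb : |Real.cos t - (1 - t ^ 2 / 2)| ≤ |t| ^ 4 * (5 / 96) :=
    Real.cos_bound (by rw [abs_of_nonneg h0]; linarith)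
  rw [abs_of_nonneg h0] at hb
  have hb' : Real.cos t ≤ 1 - t ^ 2 / 2 + t ^ 4 * (5 / 96) := by
    have := abs_le.mp hb; linarith [this.2]
  have hc : 0 ≤ 1 + (-(1/4)) * t ^ 2 + (1/48) * t ^ 4 := by
    nlinarith [pow_le_pow_left₀ h0 h1 2, pow_nonneg h0 4]
  rw [show (1 + (-(1/4)) * t ^ 2 + (1/48) * t ^ 4 : ℝ)
      = Real.sqrt ((1 + (-(1/4)) * t ^ 2 + (1/48) * t ^ 4) ^ 2) from
    (Real.sqrt_sq hc).symm]
  apply Real.sqrt_le_sqrt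
  nlinarith [pow_nonneg h0 4, pow_nonneg h0 6, pow_nonneg h0 8, sq_nonneg t,
    pow_le_pow_left₀ h0 h1 6]

/-- The value of the arithmetic-mean equi-affine distance function of the unit
disk at its center, `(4/3)·∫₀^{π/6} √(cos t) dt`, lies strictly between
`0.68` and `0.69`. -/
theorem disk_center_value_bounds :
    0.68 < (4 / 3) * ∫ t in (0 : ℝ)..(Real.pi / 6), Real.sqrt (Real.cos t) ∧
    (4 / 3) * (∫ t in (0 : ℝ)..(Real.pi / 6), Real.sqrt (Real.cos t)) < 0.69 := by
  set a : ℝ := Real.pi / 6 with ha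
  have hal : 0.5235 < a := by
    have := Real.pi_gt_d6; rw [ha]; linarith
  have hau : a < 0.525 := by
    have := Real.pi_lt_d2; rw [ha]; linarith
  have ha0 : (0:ℝ) ≤ a := by linarith
  have hcont : Continuous fun t : ℝ => Real.sqrt (Real.cos t) :=
    Real.continuous_sqrt.comp Real.continuous_cos
  have hintS : IntervalIntegrable (fun t => Real.sqrt (Real.cos t))
      MeasureTheory.volume 0 a := hcont.intervalIntegrable _ _
  have hintL : IntervalIntegrable (fun t : ℝ => 1 + (-(1/4)) * t ^ 2 + (-(1/8)) * t ^ 4)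
      MeasureTheory.volume 0 a := (by continuity : Continuous _).intervalIntegrable _ _
  have hintU : IntervalIntegrable (fun t : ℝ => 1 + (-(1/4)) * t ^ 2 + (1/48) * t ^ 4)
      MeasureTheory.volume 0 a := (by continuity : Continuous _).intervalIntegrable _ _
  have hlow : a + (-(1/4)) * a ^ 3 / 3 + (-(1/8)) * a ^ 5 / 5
      ≤ ∫ t in (0:ℝ)..a, Real.sqrt (Real.cos t) := by
    rw [← intpoly a (-(1/4)) (-(1/8))]
    apply integral_mono_on ha0 hintL hintS
    intro t ht
    exact sqrt_cos_lower ht.1 (by linarith [ht.2])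
  have hupp : (∫ t in (0:ℝ)..a, Real.sqrt (Real.cos t))
      ≤ a + (-(1/4)) * a ^ 3 / 3 + (1/48) * a ^ 5 / 5 := by
    rw [← intpoly a (-(1/4)) (1/48)]
    apply integral_mono_on ha0 hintS hintU
    intro t ht
    exact sqrt_cos_upper ht.1 (by linarith [ht.2])
  have h3 : a ^ 3 ≤ 0.525 ^ 3 := pow_le_pow_left₀ ha0 (le_of_lt hau) 3
  have h3' : 0.5235 ^ 3 ≤ a ^ 3 := pow_le_pow_left₀ (by norm_num) (le_of_lt hal) 3
  have h5 : a ^ 5 ≤ 0.525 ^ 5 := pow_le_pow_left₀ ha0 (le_of_lt hau) 5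
  have h5' : (0:ℝ) ≤ a ^ 5 := pow_nonneg ha0 5
  constructor
  · have : (0.51 : ℝ) < a + (-(1/4)) * a ^ 3 / 3 + (-(1/8)) * a ^ 5 / 5 := by
      nlinarith
    nlinarith [hlow]
  · have : a + (-(1/4)) * a ^ 3 / 3 + (1/48) * a ^ 5 / 5 < 0.5175 := by
      nlinarith
    nlinarith [hupp]
end
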